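/- Let δ ≥ 3, and let (δ, K₁, K₂, C₀, C₁) be integer parameters with C = min(C₀,C₁). Define a triangle (a,b,c) with 1 ≤ a ≤ b ≤ c ≤ δ to be allowed if it is metric (a + b ≥ c), if its perimeter p = a+b+c being odd implies 2K₁ < p and b + c < 2K₂ + a + 1, and if p < C₁ when p is odd and p < C₀ when p is even. Then an integer M with 1 ≤ M ≤ δ satisfies: for all 1 ≤ b ≤ δ the triangle (M, M, b) is allowed, if and only if max(K₁, ⌈δ/2⌉) ≤ M ≤ min(K₂, ⌊(C−δ−1)/2⌋). -/
import Mathlib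


/-- A triangle `(a,b,c)` with `a ≤ b ≤ c` (distances from `{1,…,δ}`) is *allowed* for
parameters `(K₁, K₂, C₀, C₁)`: it is metric, if its perimeter is odd then `2K₁ < p` and
`b + c < 2K₂ + a + 1`, and `p < C₁` for odd `p`, `p < C₀` for even `p`. -/
def AllowedTriangle (K₁ K₂ C₀ C₁ a b c : ℕ) : Prop :=
  c ≤ a + b ∧
  (Odd (a + b + c) → 2 * K₁ < a + b + c ∧ b + c < 2 * K₂ + a + 1) ∧
  (Odd (a + b + c) → a + b + c < C₁) ∧
  (Even (a + b + c) → a + b + c < C₀)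

/-- Characterization of magic distances: `M` allows all triangles `(M,M,b)` iff
`max(K₁,⌈δ/2⌉) ≤ M ≤ min(K₂,⌊(C−δ−1)/2⌋)`. -/
theorem stmt0 (δ K₁ K₂ C₀ C₁ : ℕ) (hδ : 3 ≤ δ)
    (hK₁ : 1 ≤ K₁) (hK₁₂ : K₁ ≤ K₂) (hK₂ : K₂ ≤ 2 * δ)
    (hC₀e : Even C₀) (hC₁o : Odd C₁)
    (hC₀l : 2 * δ < C₀) (hC₁l : 2 * δ < C₁)
    (hC₀u : C₀ ≤ 3 * δ + 2) (hC₁u : C₁ ≤ 3 * δ + 2)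
    (M : ℕ) (hM1 : 1 ≤ M) (hMδ : M ≤ δ) :
    (∀ b, 1 ≤ b → b ≤ δ →
        (b ≤ M → AllowedTriangle K₁ K₂ C₀ C₁ b M M) ∧
        (M ≤ b → AllowedTriangle K₁ K₂ C₀ C₁ M M b)) ↔
      (max K₁ ((δ + 1) / 2) ≤ M ∧ M ≤ min K₂ ((min C₀ C₁ - δ - 1) / 2)) := by
  rw [Nat.even_iff] at hC₀e
  rw [Nat.odd_iff] at hC₁o
  simp only [AllowedTriangle]
  constructor
  · intro h
    have h1 : 2 * K₁ < 1 + M + M ∧ M + M < 2 * K₂ + 1 + 1 := by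
      obtain ⟨hA, -⟩ := h 1 le_rfl (by omega)
      obtain ⟨-, hb, -, -⟩ := hA hM1
      exact hb ⟨M, by ring⟩
    obtain ⟨h1a, h1b⟩ := h1
    have hmet : δ ≤ 2 * M := by
      rcases le_or_gt δ M with h' | h'
      · omega
      · obtain ⟨-, hA⟩ := h δ (by omega) le_rfl
        obtain ⟨hm, -, -, -⟩ := hA h'.le
        omega
    have key : ∀ b, 1 ≤ b → b ≤ δ →
        ((2 * M + b) % 2 = 1 → 2 * M + b < C₁) ∧
        ((2 * M + b) % 2 = 0 → 2 * M + b < C₀) := by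
      intro b hb1 hb2
      rcases le_or_gt b M with hbM | hMb
      · obtain ⟨hA, -⟩ := h b hb1 hb2
        obtain ⟨-, -, hc, hd⟩ := hA hbM
        rw [Nat.odd_iff] at hc
        rw [Nat.even_iff] at hd
        exact ⟨fun hp => by have := hc (by omega); omega,
               fun hp => by have := hd (by omega); omega⟩
      · obtain ⟨-, hA⟩ := h b hb1 hb2
        obtain ⟨-, -, hc, hd⟩ := hA hMb.le
        rw [Nat.odd_iff] at hc
        rw [Nat.even_iff] at hd
        exact ⟨fun hp => by have := hc (by omega); omega,
               fun hp => by have := hd (by omega); omega⟩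
    obtain ⟨c1, c0⟩ := key δ (by omega) le_rfl
    obtain ⟨c1', c0'⟩ := key (δ - 1) (by omega) (by omega)
    rcases Nat.mod_two_eq_zero_or_one δ with h2 | h2
    · have a1 := c0 (by omega)
      have a2 := c1' (by omega)
      omega
    · have a1 := c1 (by omega)
      have a2 := c0' (by omega)
      omega
  · rintro ⟨hmax, hmin⟩ b hb1 hb2
    have hK : K₁ ≤ M ∧ δ ≤ 2 * M ∧ M ≤ K₂ ∧ 2 * M + δ + 1 ≤ C₀ ∧ 2 * M + δ + 1 ≤ C₁ := by
      omega
    refine ⟨fun _ => ⟨by omega, fun _ => ⟨by omega, by omega⟩, fun _ => by omega,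
              fun _ => by omega⟩,
            fun _ => ⟨by omega, fun _ => ⟨by omega, by omega⟩, fun _ => by omega,
              fun _ => by omega⟩⟩
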